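/- arXiv:1111.3827 — 4 statements merged into one kernel-verified Lean document; each statement's English description precedes it below -/
import Mathlib

section
/- For every nonnegative integer $d$, the number of pairs $(l,m)$ of nonnegative integers satisfying $2l + 3m \le d$ equals $1 + \lfloor (d^2+6d)/12 \rfloor$. -/
lemma mod12_aux (e : ℕ) : (e^2 + 6*e) % 12 = ((e % 12)^2 + 6*(e % 12)) % 12 := by
  conv_lhs => rw [Nat.add_mod, Nat.pow_mod, Nat.mul_mod]
  conv_rhs => rw [Nat.add_mod, Nat.pow_mod, Nat.mul_mod]
  simp [Nat.mod_mod_of_dvd]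

lemma step_arith (e : ℕ) :
    (e+2)/3 + 1 + (1 + (e^2 + 6*e)/12) = 1 + ((e+2)^2 + 6*(e+2))/12 := by
  have key : (e+2)^2 + 6*(e+2) = e^2 + 6*e + (4*e + 16) := by ring
  have h12 := mod12_aux e
  obtain ⟨a, ha⟩ : ∃ a, e^2 + 6*e = a := ⟨_, rfl⟩
  rw [key, ha]
  rw [ha] at h12
  have hr : e % 12 < 12 := Nat.mod_lt _ (by norm_num)
  set r := e % 12 with hrdef
  interval_cases r <;> omega

lemma sum_formula (d : ℕ) :
    ∑ l ∈ Finset.range (d/2+1), ((d - 2*l)/3 + 1) = 1 + (d^2 + 6*d)/12 := by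
  induction d using Nat.strong_induction_on with
  | _ d ih =>
    match d with
    | 0 => decide
    | 1 => decide
    | (e+2) =>
      have h2 : (e+2)/2 + 1 = (e/2 + 1) + 1 := by omega
      rw [h2, Finset.sum_range_succ']
      have hterm : ∀ l, ((e+2) - 2*(l+1))/3 + 1 = (e - 2*l)/3 + 1 := by
        intro l; congr 1; omega
      simp only [hterm]
      rw [ih e (by omega)]
      have h0 : ((e+2) - 2*0)/3 + 1 = (e+2)/3 + 1 := by omega
      rw [h0, ← step_arith e]
      ring

theorem count_pairs_2l3m_le (d : ℕ) :
    ((Finset.range (d+1) ×ˢ Finset.range (d+1)).filter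
      (fun p : ℕ × ℕ => 2 * p.1 + 3 * p.2 ≤ d)).card = 1 + (d^2 + 6*d)/12 := by
  rw [Finset.card_filter, Finset.sum_product]
  have inner : ∀ l, (∑ m ∈ Finset.range (d+1), if 2*l+3*m ≤ d then 1 else 0)
      = if l ≤ d/2 then (d - 2*l)/3 + 1 else 0 := by
    intro l
    rw [← Finset.card_filter]
    rw [show (Finset.range (d+1)).filter (fun m => 2*l+3*m ≤ d)
        = Finset.range (if l ≤ d/2 then (d - 2*l)/3 + 1 else 0) from by
      ext m; simp only [Finset.mem_filter, Finset.mem_range]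
      split_ifs with h <;> omega]
    rw [Finset.card_range]
  simp only [inner]
  rw [← Finset.sum_filter]
  rw [show (Finset.range (d+1)).filter (· ≤ d/2) = Finset.range (d/2+1) from by
    ext l; simp only [Finset.mem_filter, Finset.mem_range]; omega]
  exact sum_formula d
end

section
/- In the reference triangle, the 7-point rule with weight $9/40$ at the centroid, weight $(155-\sqrt{15})/1200$ at the three points with areal coordinates permutations of $(1-2a, a, a)$ where $a = (6-\sqrt{15})/21$, and weight $(155+\sqrt{15})/1200$ at the three points with areal coordinates permutations of $(1-2b, b, b)$ where $b = (6+\sqrt{15})/21$, is exact for all polynomials of degree at most 5. -/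
open intervalIntegral MvPolynomial

lemma beta_int (k : ℕ) : ∀ i : ℕ, ∫ x in (0:ℝ)..1, x ^ i * (1 - x) ^ k
    = (Nat.factorial i * Nat.factorial k : ℝ) / (Nat.factorial (i + k + 1)) := by
  induction k with
  | zero =>
    intro i
    simp only [pow_zero, mul_one, integral_pow, Nat.add_zero, Nat.factorial_succ,
      Nat.factorial_zero]
    have h : (0:ℝ) < (i:ℝ) + 1 := by positivity
    have h2 : ((Nat.factorial i : ℕ) : ℝ) ≠ 0 := by
      exact_mod_cast Nat.factorial_ne_zero i
    push_cast
    rw [one_pow, zero_pow (by omega : i + 1 ≠ 0)]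
    field_simp
    norm_num
  | succ k ih =>
    intro i
    have key : ∀ x : ℝ, x ^ i * (1 - x) ^ (k+1) = x ^ i * (1-x) ^ k - x ^ (i+1) * (1-x) ^ k := by
      intro x; ring
    simp only [key]
    have c1 : ∀ m : ℕ, IntervalIntegrable (fun x : ℝ => x ^ m * (1-x) ^ k) MeasureTheory.volume 0 1 := by
      intro m
      exact ((continuous_pow m).mul ((continuous_const.sub continuous_id).pow k)).intervalIntegrable 0 1
    rw [integral_sub (c1 i) (c1 (i+1)), ih i, ih (i+1)]
    have e1 : i + (k+1) + 1 = (i + k + 1) + 1 := by omega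
    have e2 : (i+1) + k + 1 = (i + k + 1) + 1 := by omega
    rw [e1, e2, Nat.factorial_succ (i+k+1), Nat.factorial_succ k, Nat.factorial_succ i]
    have h1 : ((Nat.factorial (i+k+1) : ℕ) : ℝ) ≠ 0 := by exact_mod_cast Nat.factorial_ne_zero _
    push_cast
    field_simp
    ring

lemma mono_exact (c : ℝ) (i j : ℕ) (h : i + j ≤ 5) :
    (9/40 : ℝ) * (c * (((1:ℝ)/3) ^ i * ((1:ℝ)/3) ^ j))
      + ((155 - Real.sqrt 15)/1200) *
        (c * (((6 - Real.sqrt 15)/21) ^ i * ((6 - Real.sqrt 15)/21) ^ j)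
          + c * ((1 - 2*((6 - Real.sqrt 15)/21)) ^ i * ((6 - Real.sqrt 15)/21) ^ j)
          + c * (((6 - Real.sqrt 15)/21) ^ i * (1 - 2*((6 - Real.sqrt 15)/21)) ^ j))
      + ((155 + Real.sqrt 15)/1200) *
        (c * (((6 + Real.sqrt 15)/21) ^ i * ((6 + Real.sqrt 15)/21) ^ j)
          + c * ((1 - 2*((6 + Real.sqrt 15)/21)) ^ i * ((6 + Real.sqrt 15)/21) ^ j)
          + c * (((6 + Real.sqrt 15)/21) ^ i * (1 - 2*((6 + Real.sqrt 15)/21)) ^ j))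
    = 2 * (c / ((j:ℝ) + 1) *
        ((Nat.factorial i : ℝ) * (Nat.factorial (j+1)) / (Nat.factorial (i + (j+1) + 1)))) := by
  have hs : Real.sqrt 15 ^ 2 = 15 := Real.sq_sqrt (by norm_num)
  have hi : i ≤ 5 := le_trans (Nat.le_add_right _ _) h
  have hj : j ≤ 5 := le_trans (Nat.le_add_left _ _) h
  interval_cases i <;> interval_cases j
  · norm_num [Nat.factorial]
    linear_combination (c * (0)) * hs
  · norm_num [Nat.factorial]
    linear_combination (c * (0)) * hs
  · norm_num [Nat.factorial]
    linear_combination (c * ((17/4900))) * hs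
  · norm_num [Nat.factorial]
    linear_combination (c * ((61/15435) + (-1/926100)*Real.sqrt 15^2)) * hs
  · norm_num [Nat.factorial]
    linear_combination (c * ((22357/6482700) + (17/777924)*Real.sqrt 15^2)) * hs
  · norm_num [Nat.factorial]
    linear_combination (c * ((7619/2722734) + (3823/81682020)*Real.sqrt 15^2 + (-1/81682020)*Real.sqrt 15^4)) * hs
  · norm_num [Nat.factorial]
    linear_combination (c * (0)) * hs
  · norm_num [Nat.factorial]
    linear_combination (c * ((-17/9800))) * hs
  · norm_num [Nat.factorial]
    linear_combination (c * ((-149/617400) + (1/1852200)*Real.sqrt 15^2)) * hs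
  · norm_num [Nat.factorial]
    linear_combination (c * ((3263/12965400) + (-223/19448100)*Real.sqrt 15^2)) * hs
  · norm_num [Nat.factorial]
    linear_combination (c * ((88547/272273400) + (-1019/81682020)*Real.sqrt 15^2 + (1/163364040)*Real.sqrt 15^4)) * hs
  · omega
  · norm_num [Nat.factorial]
    linear_combination (c * ((17/4900))) * hs
  · norm_num [Nat.factorial]
    linear_combination (c * ((-149/617400) + (1/1852200)*Real.sqrt 15^2)) * hs
  · norm_num [Nat.factorial]
    linear_combination (c * ((-109/1440600) + (481/38896200)*Real.sqrt 15^2)) * hs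
  · norm_num [Nat.factorial]
    linear_combination (c * ((10481/272273400) + (533/102102525)*Real.sqrt 15^2 + (-1/816820200)*Real.sqrt 15^4)) * hs
  · omega
  · omega
  · norm_num [Nat.factorial]
    linear_combination (c * ((61/15435) + (-1/926100)*Real.sqrt 15^2)) * hs
  · norm_num [Nat.factorial]
    linear_combination (c * ((3263/12965400) + (-223/19448100)*Real.sqrt 15^2)) * hs
  · norm_num [Nat.factorial]
    linear_combination (c * ((10481/272273400) + (533/102102525)*Real.sqrt 15^2 + (-1/816820200)*Real.sqrt 15^4)) * hs
  · omega
  · omega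
  · omega
  · norm_num [Nat.factorial]
    linear_combination (c * ((22357/6482700) + (17/777924)*Real.sqrt 15^2)) * hs
  · norm_num [Nat.factorial]
    linear_combination (c * ((88547/272273400) + (-1019/81682020)*Real.sqrt 15^2 + (1/163364040)*Real.sqrt 15^4)) * hs
  · omega
  · omega
  · omega
  · omega
  · norm_num [Nat.factorial]
    linear_combination (c * ((7619/2722734) + (3823/81682020)*Real.sqrt 15^2 + (-1/81682020)*Real.sqrt 15^4)) * hs
  · omega
  · omega
  · omega
  · omega
  · omega

set_option maxHeartbeats 1000000 in
theorem seven_point_rule_degree_five (f : MvPolynomial (Fin 2) ℝ)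
    (hf : f.totalDegree ≤ 5) :
    (9/40 : ℝ) * MvPolynomial.eval ![(1:ℝ)/3, 1/3] f
      + ((155 - Real.sqrt 15)/1200) *
        (MvPolynomial.eval ![(6 - Real.sqrt 15)/21, (6 - Real.sqrt 15)/21] f
          + MvPolynomial.eval ![1 - 2*((6 - Real.sqrt 15)/21), (6 - Real.sqrt 15)/21] f
          + MvPolynomial.eval ![(6 - Real.sqrt 15)/21, 1 - 2*((6 - Real.sqrt 15)/21)] f)
      + ((155 + Real.sqrt 15)/1200) *
        (MvPolynomial.eval ![(6 + Real.sqrt 15)/21, (6 + Real.sqrt 15)/21] f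
          + MvPolynomial.eval ![1 - 2*((6 + Real.sqrt 15)/21), (6 + Real.sqrt 15)/21] f
          + MvPolynomial.eval ![(6 + Real.sqrt 15)/21, 1 - 2*((6 + Real.sqrt 15)/21)] f) =
    (1 / (1/2 : ℝ)) * ∫ x in (0:ℝ)..1, ∫ y in (0:ℝ)..(1-x),
      MvPolynomial.eval ![x, y] f := by
  have hd5 : ∀ d ∈ f.support, d 0 + d 1 ≤ 5 := by
    intro d hd
    have h1 := MvPolynomial.le_totalDegree hd
    have h2 : (d.sum fun _ e => e) = d 0 + d 1 := by
      rw [Finsupp.sum_fintype _ _ (fun _ => rfl), Fin.sum_univ_two]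
    omega
  have rhs_eq : (∫ x in (0:ℝ)..1, ∫ y in (0:ℝ)..(1-x), MvPolynomial.eval ![x, y] f)
      = ∑ d ∈ f.support, MvPolynomial.coeff d f / ((d 1 : ℝ) + 1) *
          ((Nat.factorial (d 0) : ℝ) * (Nat.factorial (d 1 + 1)) /
            (Nat.factorial (d 0 + (d 1 + 1) + 1))) := by
    have inner : ∀ x : ℝ, (∫ y in (0:ℝ)..(1-x),
        ∑ d ∈ f.support, MvPolynomial.coeff d f * (x ^ d 0 * y ^ d 1))
        = ∑ d ∈ f.support, MvPolynomial.coeff d f / ((d 1 : ℝ) + 1) *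
            (x ^ d 0 * (1 - x) ^ (d 1 + 1)) := by
      intro x
      rw [intervalIntegral.integral_finset_sum]
      · refine Finset.sum_congr rfl fun d _ => ?_
        rw [integral_const_mul, integral_const_mul, integral_pow,
          zero_pow (Nat.succ_ne_zero (d 1))]
        ring
      · intro d _
        exact Continuous.intervalIntegrable (by fun_prop) _ _
    simp only [MvPolynomial.eval_eq', Fin.prod_univ_two, Matrix.cons_val_zero,
      Matrix.cons_val_one, Matrix.head_cons]
    simp only [inner]
    rw [intervalIntegral.integral_finset_sum]
    · refine Finset.sum_congr rfl fun d _ => ?_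
      rw [integral_const_mul, beta_int (d 1 + 1) (d 0)]
    · intro d _
      exact Continuous.intervalIntegrable (by fun_prop) _ _
  rw [rhs_eq, show (1 / (1/2 : ℝ)) = 2 by norm_num]
  simp only [MvPolynomial.eval_eq', Fin.prod_univ_two, Matrix.cons_val_zero,
    Matrix.cons_val_one, Matrix.head_cons]
  simp only [Finset.mul_sum, ← Finset.sum_add_distrib]
  refine Finset.sum_congr rfl fun d hd => ?_
  linear_combination mono_exact (MvPolynomial.coeff d f) (d 0) (d 1) (hd5 d hd)
end

section
/- If $w_0, v_1, v_2, u_1, u_2$ satisfy the degree-5 moment equations $w_0 + v_1 + v_2 = 1$, $v_1u_1^2 + v_2u_2^2 = 1/4$, $v_1u_1^3 + v_2u_2^3 = 1/10$, $v_1u_1^4 + v_2u_2^4 = 1/10$, $v_1u_1^5 + v_2u_2^5 = 2/35$, with $u_1 \ne u_2$, then $u_1+u_2 = 2/7$ and $u_1u_2 = -2/7$ and $w_0 = 9/40$. -/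
theorem degree5_moment_equations (w₀ v₁ v₂ u₁ u₂ : ℝ)
    (h0 : w₀ + v₁ + v₂ = 1)
    (h2 : v₁*u₁^2 + v₂*u₂^2 = 1/4)
    (h3 : v₁*u₁^3 + v₂*u₂^3 = 1/10)
    (h4 : v₁*u₁^4 + v₂*u₂^4 = 1/10)
    (h5 : v₁*u₁^5 + v₂*u₂^5 = 2/35)
    (hne : u₁ ≠ u₂) :
    u₁ + u₂ = 2/7 ∧ u₁ * u₂ = -2/7 ∧ w₀ = 9/40 := by
  have e1 : (u₁+u₂)*(1/10) - (u₁*u₂)*(1/4) = 1/10 := by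
    linear_combination -(u₁+u₂)*h3 + (u₁*u₂)*h2 + h4
  have e2 : (u₁+u₂)*(1/10) - (u₁*u₂)*(1/10) = 2/35 := by
    linear_combination -(u₁+u₂)*h4 + (u₁*u₂)*h3 + h5
  have hp : u₁ * u₂ = -2/7 := by linarith
  have hs : u₁ + u₂ = 2/7 := by linarith
  refine ⟨hs, hp, ?_⟩
  have e3 : (u₁+u₂)*(1/4) - (u₁*u₂)*(v₁*u₁ + v₂*u₂) = 1/10 := by
    linear_combination -(u₁+u₂)*h2 + h3
  have e4 : (u₁+u₂)*(v₁*u₁ + v₂*u₂) - (u₁*u₂)*(v₁ + v₂) = 1/4 := by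
    linear_combination h2
  rw [hs, hp] at e3 e4
  linarith
end

section
/- The six-point degree-3 rule of type $[0,0,1]$: there exists a six-point orbit $\{(L_1,L_2,L_3)\}$ (all permutations of a triple with $L_1+L_2+L_3=1$) whose invariants satisfy $p = 1/4$ and $q = 1/10$, and the equal-weight rule with weight $1/6$ at each of these six points is exact for all polynomials of degree at most 3. -/
open Real in
lemma roots_exist : ∃ u v w : ℝ, u ≠ v ∧ v ≠ w ∧ u ≠ w ∧
    (4*u^3 - 3*u = 4/5) ∧ (4*v^3 - 3*v = 4/5) ∧ (4*w^3 - 3*w = 4/5) := by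
  set θ := arccos (4/5) / 3 with hθ
  have hpi := pi_pos
  have hθ0 : 0 < θ := by
    have := arccos_pos.2 (by norm_num : (4/5:ℝ) < 1); positivity
  have hθ6 : θ < π/6 := by
    have := arccos_lt_pi_div_two.2 (by norm_num : (0:ℝ) < 4/5)
    rw [hθ]; linarith
  refine ⟨cos θ, cos (2*π/3 - θ), cos (2*π/3 + θ), ?_, ?_, ?_, ?_, ?_, ?_⟩
  · exact ne_of_gt (strictAntiOn_cos ⟨by linarith, by linarith⟩ ⟨by linarith, by linarith⟩
      (by linarith))
  · exact ne_of_gt (strictAntiOn_cos ⟨by linarith, by linarith⟩ ⟨by linarith, by linarith⟩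
      (by linarith))
  · exact ne_of_gt (strictAntiOn_cos ⟨by linarith, by linarith⟩ ⟨by linarith, by linarith⟩
      (by linarith))
  · have h := cos_arccos (by norm_num : (-1:ℝ) ≤ 4/5) (by norm_num : (4/5:ℝ) ≤ 1)
    have h3 : 3*θ = arccos (4/5) := by rw [hθ]; ring
    rw [← h3, cos_three_mul] at h; linarith
  · have h : cos (3*(2*π/3 - θ)) = 4/5 := by
      have : 3*(2*π/3 - θ) = 2*π - 3*θ := by ring
      rw [this, cos_sub, cos_two_pi, sin_two_pi]
      have h3 : 3*θ = arccos (4/5) := by rw [hθ]; ring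
      rw [h3, cos_arccos (by norm_num) (by norm_num)]; ring
    rw [cos_three_mul] at h; linarith
  · have h : cos (3*(2*π/3 + θ)) = 4/5 := by
      have : 3*(2*π/3 + θ) = 2*π + 3*θ := by ring
      rw [this, cos_add, cos_two_pi, sin_two_pi]
      have h3 : 3*θ = arccos (4/5) := by rw [hθ]; ring
      rw [h3, cos_arccos (by norm_num) (by norm_num)]; ring
    rw [cos_three_mul] at h; linarith

lemma vieta (u v w : ℝ) (huv : u ≠ v) (hvw : v ≠ w) (huw : u ≠ w)
    (hu : 4*u^3 - 3*u = 4/5) (hv : 4*v^3 - 3*v = 4/5) (hw : 4*w^3 - 3*w = 4/5) :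
    u + v + w = 0 ∧ u*v + v*w + w*u = -3/4 ∧ u*v*w = 1/5 := by
  have h1 : (u - v) * (u^2 + u*v + v^2 - 3/4) = 0 := by linear_combination (hu - hv)/4
  have h2 : (u - w) * (u^2 + u*w + w^2 - 3/4) = 0 := by linear_combination (hu - hw)/4
  have h1' : u^2 + u*v + v^2 - 3/4 = 0 := (mul_eq_zero.1 h1).resolve_left (sub_ne_zero.2 huv)
  have h2' : u^2 + u*w + w^2 - 3/4 = 0 := (mul_eq_zero.1 h2).resolve_left (sub_ne_zero.2 huw)
  have h3 : (v - w) * (u + v + w) = 0 := by linear_combination h1' - h2'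
  have hsum : u + v + w = 0 := (mul_eq_zero.1 h3).resolve_left (sub_ne_zero.2 hvw)
  refine ⟨hsum, ?_, ?_⟩
  · linear_combination (u + v) * hsum - h1'
  · linear_combination u * ((u + v) * hsum - h1') - (u^2 + u*w) * hsum + u*w*hsum + hu/4

open intervalIntegral in
lemma intpoly (a0 a1 a2 a3 a4 : ℝ) :
    ∫ x in (0:ℝ)..1, (a0 + a1*x^1 + a2*x^2 + a3*x^3 + a4*x^4) = a0 + a1/2 + a2/3 + a3/4 + a4/5 := by
  rw [integral_add, integral_add, integral_add, integral_add] <;>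
    try exact Continuous.intervalIntegrable (by fun_prop) 0 1
  simp only [integral_const_mul, integral_const, integral_pow, smul_eq_mul, one_mul, sub_zero]
  ring

lemma key (a b c r : ℝ) (h1 : a + b + c = 1) (h2 : a*b + b*c + c*a = 1/4)
    (h3 : a*b*c = 1/60) (i j : ℕ) (hij : i + j ≤ 3) :
    (1/6 : ℝ) * (r * b^i * c^j + r * c^i * b^j + r * a^i * c^j + r * c^i * a^j
        + r * a^i * b^j + r * b^i * a^j)
      = 2 * ∫ x in (0:ℝ)..1, r * x^i * (1-x)^(j+1) / ((j:ℝ)+1) := by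
  have hB : a^2 + b^2 + c^2 = 1/2 := by linear_combination (a+b+c+1)*h1 - 2*h2
  have hC : a^3 + b^3 + c^3 = 3/10 := by
    linear_combination ((a+b+c)^2+(a+b+c)+1-3*(a*b+b*c+c*a))*h1 - 3*h2 + 3*h3
  have hD : a^2*b + a^2*c + b^2*a + b^2*c + c^2*a + c^2*b = 1/5 := by
    linear_combination (a*b+b*c+c*a)*h1 + h2 - 3*h3
  have hi : i ≤ 3 := le_trans (Nat.le_add_right _ _) hij
  have hj : j ≤ 3 := le_trans (Nat.le_add_left _ _) hij
  interval_cases i <;> interval_cases j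
  · rw [intervalIntegral.integral_congr (g := fun x => r + -1*r*x^1 + 0*x^2 + 0*x^3 + 0*x^4)
        (fun x _ => by push_cast; ring), intpoly]
    ring
  · rw [intervalIntegral.integral_congr (g := fun x => (1/2)*r + -1*r*x^1 + (1/2)*r*x^2 + 0*x^3 + 0*x^4)
        (fun x _ => by push_cast; ring), intpoly]
    linear_combination (r/3)*h1
  · rw [intervalIntegral.integral_congr (g := fun x => (1/3)*r + -1*r*x^1 + r*x^2 + (-1/3)*r*x^3 + 0*x^4)
        (fun x _ => by push_cast; ring), intpoly]
    linear_combination (r/3)*hB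
  · rw [intervalIntegral.integral_congr (g := fun x => (1/4)*r + -1*r*x^1 + (3/2)*r*x^2 + -1*r*x^3 + (1/4)*r*x^4)
        (fun x _ => by push_cast; ring), intpoly]
    linear_combination (r/3)*hC
  · rw [intervalIntegral.integral_congr (g := fun x => 0 + r*x^1 + -1*r*x^2 + 0*x^3 + 0*x^4)
        (fun x _ => by push_cast; ring), intpoly]
    linear_combination (r/3)*h1
  · rw [intervalIntegral.integral_congr (g := fun x => 0 + (1/2)*r*x^1 + -1*r*x^2 + (1/2)*r*x^3 + 0*x^4)
        (fun x _ => by push_cast; ring), intpoly]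
    linear_combination (r/3)*h2
  · rw [intervalIntegral.integral_congr (g := fun x => 0 + (1/3)*r*x^1 + -1*r*x^2 + r*x^3 + (-1/3)*r*x^4)
        (fun x _ => by push_cast; ring), intpoly]
    linear_combination (r/6)*hD
  · exact absurd hij (by omega)
  · rw [intervalIntegral.integral_congr (g := fun x => 0 + 0*x^1 + r*x^2 + -1*r*x^3 + 0*x^4)
        (fun x _ => by push_cast; ring), intpoly]
    linear_combination (r/3)*hB
  · rw [intervalIntegral.integral_congr (g := fun x => 0 + 0*x^1 + (1/2)*r*x^2 + -1*r*x^3 + (1/2)*r*x^4)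
        (fun x _ => by push_cast; ring), intpoly]
    linear_combination (r/6)*hD
  · exact absurd hij (by omega)
  · exact absurd hij (by omega)
  · rw [intervalIntegral.integral_congr (g := fun x => 0 + 0*x^1 + 0*x^2 + r*x^3 + -1*r*x^4)
        (fun x _ => by push_cast; ring), intpoly]
    linear_combination (r/3)*hC
  · exact absurd hij (by omega)
  · exact absurd hij (by omega)
  · exact absurd hij (by omega)


lemma evalmono (m : Fin 2 →₀ ℕ) (r u v : ℝ) :
    MvPolynomial.eval ![u, v] (MvPolynomial.monomial m r) = r * u ^ (m 0) * v ^ (m 1) := by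
  simp [MvPolynomial.eval_monomial, Finsupp.prod_fintype, Fin.prod_univ_two, mul_assoc]

lemma inner_int (d cst : ℝ) (j : ℕ) :
    ∫ y in (0:ℝ)..d, cst * y ^ j = cst * d^(j+1) / ((j:ℝ)+1) := by
  rw [intervalIntegral.integral_const_mul, integral_pow]
  simp [mul_div_assoc]

lemma six_rule (a b c : ℝ) (h1 : a + b + c = 1) (h2 : a*b + b*c + c*a = 1/4) (h3 : a*b*c = 1/60)
    (key : ∀ (r : ℝ) (i j : ℕ), i + j ≤ 3 →
      (1/6 : ℝ) * (r * b^i * c^j + r * c^i * b^j + r * a^i * c^j + r * c^i * a^j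
        + r * a^i * b^j + r * b^i * a^j)
      = 2 * ∫ x in (0:ℝ)..1, r * x^i * (1-x)^(j+1) / ((j:ℝ)+1))
    (f : MvPolynomial (Fin 2) ℝ) (hf : f.totalDegree ≤ 3) :
    (1/6 : ℝ) * (MvPolynomial.eval ![b, c] f + MvPolynomial.eval ![c, b] f
      + MvPolynomial.eval ![a, c] f + MvPolynomial.eval ![c, a] f
      + MvPolynomial.eval ![a, b] f + MvPolynomial.eval ![b, a] f) =
    (1 / (1/2 : ℝ)) * ∫ x in (0:ℝ)..1, ∫ y in (0:ℝ)..(1-x),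
      MvPolynomial.eval ![x, y] f := by
  have hdeg : ∀ m ∈ f.support, m 0 + m 1 ≤ 3 := by
    intro m hm
    have := MvPolynomial.le_totalDegree hm
    rw [Finsupp.sum_fintype] at this
    · simpa [Fin.sum_univ_two] using this.trans hf
    · simp
  conv_lhs => rw [MvPolynomial.as_sum f]
  conv_rhs => rw [MvPolynomial.as_sum f]
  simp only [map_sum, evalmono]
  have hswap : ∀ x : ℝ,
      (∫ y in (0:ℝ)..(1-x), ∑ m ∈ f.support,
        MvPolynomial.coeff m f * x ^ (m 0) * y ^ (m 1)) =
      ∑ m ∈ f.support, MvPolynomial.coeff m f * x ^ (m 0) * (1-x)^(m 1+1) / ((m 1 : ℝ)+1) := by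
    intro x
    rw [intervalIntegral.integral_finset_sum
      (fun m _ => Continuous.intervalIntegrable (by fun_prop) _ _)]
    exact Finset.sum_congr rfl fun m _ => inner_int _ _ _
  simp only [hswap]
  rw [intervalIntegral.integral_finset_sum
    (fun m _ => Continuous.intervalIntegrable (by fun_prop) _ _)]
  rw [← Finset.sum_add_distrib, ← Finset.sum_add_distrib, ← Finset.sum_add_distrib,
    ← Finset.sum_add_distrib, ← Finset.sum_add_distrib, Finset.mul_sum, Finset.mul_sum]
  refine Finset.sum_congr rfl fun m hm => ?_
  rw [show (1 / (1/2 : ℝ)) = 2 by norm_num]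
  exact key (MvPolynomial.coeff m f) (m 0) (m 1) (hdeg m hm)


theorem six_point_rule_degree_three :
    ∃ L₁ L₂ L₃ : ℝ, L₁ + L₂ + L₃ = 1 ∧
      1 - 3*(L₁*L₂ + L₂*L₃ + L₃*L₁) = 1/4 ∧
      1 + (27/2)*(L₁*L₂*L₃) - (9/2)*(L₁*L₂ + L₂*L₃ + L₃*L₁) = 1/10 ∧
      ∀ f : MvPolynomial (Fin 2) ℝ, f.totalDegree ≤ 3 →
        (1/6 : ℝ) * (MvPolynomial.eval ![L₂, L₃] f + MvPolynomial.eval ![L₃, L₂] f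
          + MvPolynomial.eval ![L₁, L₃] f + MvPolynomial.eval ![L₃, L₁] f
          + MvPolynomial.eval ![L₁, L₂] f + MvPolynomial.eval ![L₂, L₁] f) =
        (1 / (1/2 : ℝ)) * ∫ x in (0:ℝ)..1, ∫ y in (0:ℝ)..(1-x),
          MvPolynomial.eval ![x, y] f := by
  obtain ⟨u, v, w, huv, hvw, huw, hu, hv, hw⟩ := roots_exist
  obtain ⟨hsum, he2, he3⟩ := vieta u v w huv hvw huw hu hv hw
  refine ⟨(1+u)/3, (1+v)/3, (1+w)/3, ?_, ?_, ?_, ?_⟩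
  · linear_combination (1/3)*hsum
  · have h2 : (1+u)/3*((1+v)/3) + (1+v)/3*((1+w)/3) + (1+w)/3*((1+u)/3) = 1/4 := by
      linear_combination (2/9)*hsum + (1/9)*he2
    linear_combination -3*h2
  · have h2 : (1+u)/3*((1+v)/3) + (1+v)/3*((1+w)/3) + (1+w)/3*((1+u)/3) = 1/4 := by
      linear_combination (2/9)*hsum + (1/9)*he2
    have h3 : (1+u)/3*((1+v)/3)*((1+w)/3) = 1/60 := by
      linear_combination (1/27)*hsum + (1/27)*he2 + (1/27)*he3
    linear_combination (27/2)*h3 - (9/2)*h2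
  · intro f hf
    exact six_rule _ _ _ (by linear_combination (1/3)*hsum)
      (by linear_combination (2/9)*hsum + (1/9)*he2)
      (by linear_combination (1/27)*hsum + (1/27)*he2 + (1/27)*he3)
      (fun r i j hij => key _ _ _ r (by linear_combination (1/3)*hsum)
        (by linear_combination (2/9)*hsum + (1/9)*he2)
        (by linear_combination (1/27)*hsum + (1/27)*he2 + (1/27)*he3) i j hij) f hf
end
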